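/- arXiv:1906.08336 — 7 statements merged into one kernel-verified Lean document; each statement's English description precedes it below -/
import Mathlib

section
/- For every natural number n ≥ 3, the Tetranacci numbers satisfy 3·∑_{k=0}^{n} u_k² = 1 + 3·u_n·u_{n+1} − (u_{n+1} − u_{n−1})² + u_n·u_{n−2} + u_{n−2}·u_{n−3}. -/
/-- The Tetranacci numbers: u 0 = 0, u 1 = 1, u 2 = 1, u 3 = 2 and
    u (n+4) = u (n+3) + u (n+2) + u (n+1) + u n. -/
def tetra : ℕ → ℤ
  | 0 => 0
  | 1 => 1
  | 2 => 1
  | 3 => 2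
  | n + 4 => tetra (n + 3) + tetra (n + 2) + tetra (n + 1) + tetra n

lemma sum_sq_tetra_aux (m : ℕ) :
    3 * ∑ k ∈ Finset.range (m + 4), (tetra k) ^ 2 =
      1 + 3 * tetra (m + 3) * tetra (m + 4) - (tetra (m + 4) - tetra (m + 2)) ^ 2
        + tetra (m + 3) * tetra (m + 1) + tetra (m + 1) * tetra m := by
  induction m with
  | zero => decide
  | succ m ih =>
      rw [Finset.sum_range_succ, mul_add, ih]
      have h4 : tetra (m + 4) = tetra (m + 3) + tetra (m + 2) + tetra (m + 1) + tetra m :=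
        rfl
      have h5 : tetra (m + 5) = tetra (m + 4) + tetra (m + 3) + tetra (m + 2) + tetra (m + 1) :=
        rfl
      rw [show m + 1 + 4 = m + 5 from rfl, h5, h4]
      ring

theorem sum_sq_tetra (n : ℕ) (hn : 3 ≤ n) :
    3 * ∑ k ∈ Finset.range (n + 1), (tetra k) ^ 2 =
      1 + 3 * tetra n * tetra (n + 1) - (tetra (n + 1) - tetra (n - 1)) ^ 2
        + tetra n * tetra (n - 2) + tetra (n - 2) * tetra (n - 3) := by
  obtain ⟨m, rfl⟩ : ∃ m, n = m + 3 := ⟨n - 3, by omega⟩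
  have := sum_sq_tetra_aux m
  simpa using this
end

section
/- In the ring of formal power series ℤ⟦z⟧, the generating function of the squares of the Tetranacci numbers satisfies (1 − 2z − 4z² − 6z³ − 12z⁴ + 4z⁵ + 6z⁶ + 2z⁸ − z¹⁰) · ∑_{n≥0} u_n² z^n = z − z² − 2z³ − 2z⁴ − 2z⁵ + z⁶ + z⁷. -/
lemma tetra_rec (n : ℕ) :
    tetra (n+10)^2 = 2*tetra (n+9)^2 + 4*tetra (n+8)^2 + 6*tetra (n+7)^2
      + 12*tetra (n+6)^2 - 4*tetra (n+5)^2 - 6*tetra (n+4)^2 - 2*tetra (n+2)^2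
      + tetra n ^ 2 := by
  simp only [show n+10 = (n+6)+4 from rfl, show n+9 = (n+5)+4 from rfl,
    show n+8 = (n+4)+4 from rfl, show n+7 = (n+3)+4 from rfl,
    show n+6 = (n+2)+4 from rfl, show n+5 = (n+1)+4 from rfl, tetra]
  ring

open PowerSeries in
theorem tetra_sq_genfun :
    (1 - 2 * X - 4 * X ^ 2 - 6 * X ^ 3 - 12 * X ^ 4 + 4 * X ^ 5 + 6 * X ^ 6
        + 2 * X ^ 8 - X ^ 10 : PowerSeries ℤ)
      * PowerSeries.mk (fun n => (tetra n) ^ 2)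
    = X - X ^ 2 - 2 * X ^ 3 - 2 * X ^ 4 - 2 * X ^ 5 + X ^ 6 + X ^ 7 := by
  set f : PowerSeries ℤ := PowerSeries.mk (fun n => (tetra n) ^ 2) with hf
  have h2 : (2 : PowerSeries ℤ) = C (R := ℤ) 2 := by simp
  have h4 : (4 : PowerSeries ℤ) = C (R := ℤ) 4 := by simp
  have h6 : (6 : PowerSeries ℤ) = C (R := ℤ) 6 := by simp
  have h12 : (12 : PowerSeries ℤ) = C (R := ℤ) 12 := by simp
  rw [show (1 - 2 * X - 4 * X ^ 2 - 6 * X ^ 3 - 12 * X ^ 4 + 4 * X ^ 5 + 6 * X ^ 6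
        + 2 * X ^ 8 - X ^ 10 : PowerSeries ℤ) * f
      = f - C (R := ℤ) 2*(f*X^1) - C (R := ℤ) 4*(f*X^2) - C (R := ℤ) 6*(f*X^3) - C (R := ℤ) 12*(f*X^4)
        + C (R := ℤ) 4*(f*X^5) + C (R := ℤ) 6*(f*X^6) + C (R := ℤ) 2*(f*X^8) - f*X^10 by
      rw [h2, h4, h6, h12] at *; ring,
    show (X - X ^ 2 - 2 * X ^ 3 - 2 * X ^ 4 - 2 * X ^ 5 + X ^ 6 + X ^ 7 : PowerSeries ℤ)
      = X^1 - X^2 - C (R := ℤ) 2*X^3 - C (R := ℤ) 2*X^4 - C (R := ℤ) 2*X^5 + X^6 + X^7 by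
      rw [h2]; ring]
  ext n
  simp only [map_sub, map_add, coeff_C_mul, PowerSeries.coeff_mul_X_pow', hf, coeff_mk,
    PowerSeries.coeff_X_pow, PowerSeries.coeff_C, PowerSeries.constantCoeff_C, map_one]
  match n with
  | 0 => norm_num [tetra]
  | 1 => norm_num [tetra]
  | 2 => norm_num [tetra]
  | 3 => norm_num [tetra]
  | 4 => norm_num [tetra]
  | 5 => norm_num [tetra]
  | 6 => norm_num [tetra]
  | 7 => norm_num [tetra]
  | 8 => norm_num [tetra]
  | 9 => norm_num [tetra]
  | (m+10) =>
    have := tetra_rec m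
    norm_num [Nat.add_sub_cancel, show m+10-1 = m+9 from rfl, show m+10-2 = m+8 from rfl,
      show m+10-3 = m+7 from rfl, show m+10-4 = m+6 from rfl, show m+10-5 = m+5 from rfl,
      show m+10-6 = m+4 from rfl, show m+10-8 = m+2 from rfl, show m+10-10 = m from rfl]
    rw [if_neg (by omega : ¬ m+10=1), if_neg (by omega : ¬ m+10=2),
      if_neg (by omega : ¬ m+10=6), if_neg (by omega : ¬ m+10=7)]
    linarith [this]
end

section
/- In the ring of formal power series ℤ⟦z⟧, the Tetranacci numbers satisfy (1 − 2z − 4z² − 6z³ − 12z⁴ + 4z⁵ + 6z⁶ + 2z⁸ − z¹⁰) · ∑_{n≥0} u_n u_{n+2} z^n = 2z. -/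
lemma tetra_add4 (n : ℕ) :
    tetra (n+4) = tetra (n+3) + tetra (n+2) + tetra (n+1) + tetra n := rfl

lemma tetra_key (n : ℕ) :
    tetra (n+10) * tetra (n+12)
      = 2 * (tetra (n+9) * tetra (n+11)) + 4 * (tetra (n+8) * tetra (n+10))
        + 6 * (tetra (n+7) * tetra (n+9)) + 12 * (tetra (n+6) * tetra (n+8))
        - 4 * (tetra (n+5) * tetra (n+7)) - 6 * (tetra (n+4) * tetra (n+6))
        - 2 * (tetra (n+2) * tetra (n+4)) + tetra n * tetra (n+2) := by
  have h12 := tetra_add4 (n+8)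
  have h11 := tetra_add4 (n+7)
  have h10 := tetra_add4 (n+6)
  have h9 := tetra_add4 (n+5)
  have h8 := tetra_add4 (n+4)
  have h7 := tetra_add4 (n+3)
  have h6 := tetra_add4 (n+2)
  have h5 := tetra_add4 (n+1)
  have h4 := tetra_add4 n
  simp only [show n+8+4 = n+12 from rfl, show n+7+4 = n+11 from rfl,
    show n+6+4 = n+10 from rfl, show n+5+4 = n+9 from rfl, show n+4+4 = n+8 from rfl,
    show n+3+4 = n+7 from rfl, show n+2+4 = n+6 from rfl, show n+1+4 = n+5 from rfl,
    show n+8+3 = n+11 from rfl, show n+7+3 = n+10 from rfl, show n+6+3 = n+9 from rfl,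
    show n+5+3 = n+8 from rfl, show n+4+3 = n+7 from rfl, show n+3+3 = n+6 from rfl,
    show n+2+3 = n+5 from rfl, show n+1+3 = n+4 from rfl,
    show n+8+2 = n+10 from rfl, show n+7+2 = n+9 from rfl, show n+6+2 = n+8 from rfl,
    show n+5+2 = n+7 from rfl, show n+4+2 = n+6 from rfl, show n+3+2 = n+5 from rfl,
    show n+2+2 = n+4 from rfl, show n+1+2 = n+3 from rfl,
    show n+8+1 = n+9 from rfl, show n+7+1 = n+8 from rfl, show n+6+1 = n+7 from rfl,
    show n+5+1 = n+6 from rfl, show n+4+1 = n+5 from rfl, show n+3+1 = n+4 from rfl,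
    show n+2+1 = n+3 from rfl, show n+1+1 = n+2 from rfl] at h12 h11 h10 h9 h8 h7 h6 h5 h4
  rw [h12, h11, h10, h9, h8, h7, h6, h5, h4]
  ring

open PowerSeries in
theorem tetra_shifted_genfun :
    (1 - 2 * X - 4 * X ^ 2 - 6 * X ^ 3 - 12 * X ^ 4 + 4 * X ^ 5 + 6 * X ^ 6
        + 2 * X ^ 8 - X ^ 10 : PowerSeries ℤ)
      * PowerSeries.mk (fun n => tetra n * tetra (n + 2))
    = 2 * X := by
  set f : ℕ → ℤ := fun n => tetra n * tetra (n + 2) with hf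
  have expand :
      (1 - 2 * X - 4 * X ^ 2 - 6 * X ^ 3 - 12 * X ^ 4 + 4 * X ^ 5 + 6 * X ^ 6
        + 2 * X ^ 8 - X ^ 10 : PowerSeries ℤ) * PowerSeries.mk f
      = mk f - (2:ℤ) • (mk f * X^1) - (4:ℤ) • (mk f * X^2) - (6:ℤ) • (mk f * X^3)
        - (12:ℤ) • (mk f * X^4) + (4:ℤ) • (mk f * X^5) + (6:ℤ) • (mk f * X^6)
        + (2:ℤ) • (mk f * X^8) - mk f * X^10 := by
    simp only [zsmul_eq_mul, Int.cast_ofNat]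
    ring
  rw [expand]
  ext n
  simp only [map_sub, map_add, coeff_smul, map_zsmul, smul_eq_mul, PowerSeries.coeff_mul_X_pow', coeff_mk,
    show (2 * X : PowerSeries ℤ) = (2:ℤ) • X by simp [smul_eq_C_mul], PowerSeries.coeff_X]
  rcases Nat.lt_or_ge n 10 with h | h
  · interval_cases n <;> norm_num [hf, tetra]
  · obtain ⟨m, rfl⟩ := Nat.exists_eq_add_of_le h
    rw [if_pos (by omega : 1 ≤ 10 + m), if_pos (by omega : 2 ≤ 10 + m),
      if_pos (by omega : 3 ≤ 10 + m), if_pos (by omega : 4 ≤ 10 + m),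
      if_pos (by omega : 5 ≤ 10 + m), if_pos (by omega : 6 ≤ 10 + m),
      if_pos (by omega : 8 ≤ 10 + m), if_pos (by omega : 10 ≤ 10 + m),
      if_neg (by omega : ¬ 10 + m = 1)]
    have e1 : 10 + m - 1 = m + 9 := by omega
    have e2 : 10 + m - 2 = m + 8 := by omega
    have e3 : 10 + m - 3 = m + 7 := by omega
    have e4 : 10 + m - 4 = m + 6 := by omega
    have e5 : 10 + m - 5 = m + 5 := by omega
    have e6 : 10 + m - 6 = m + 4 := by omega
    have e8 : 10 + m - 8 = m + 2 := by omega
    have e10 : 10 + m - 10 = m := by omega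
    rw [e1, e2, e3, e4, e5, e6, e8, e10, show 10 + m = m + 10 from by omega]
    have := tetra_key m
    simp only [hf]
    simp only [show m+9+2 = m+11 from rfl, show m+8+2 = m+10 from rfl,
      show m+7+2 = m+9 from rfl, show m+6+2 = m+8 from rfl, show m+5+2 = m+7 from rfl,
      show m+4+2 = m+6 from rfl, show m+2+2 = m+4 from rfl, show m+10+2 = m+12 from rfl]
    linarith
end

section
/- In the ring of formal power series ℤ⟦z⟧, the Pentanacci numbers satisfy (1 − 2z − 4z² − 7z³ − 14z⁴ − 28z⁵ + 4z⁶ + 6z⁷ + 4z⁹ + 10z¹⁰ − z¹² − z¹⁵) · ∑_{n≥0} v_n v_{n+3} z^n = 4z. -/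
/-- The Pentanacci numbers: v 0 = 0, v 1 = 1, v 2 = 1, v 3 = 2, v 4 = 4 and
    v (n+5) = v (n+4) + v (n+3) + v (n+2) + v (n+1) + v n. -/
def penta : ℕ → ℤ
  | 0 => 0
  | 1 => 1
  | 2 => 1
  | 3 => 2
  | 4 => 4
  | n + 5 => penta (n + 4) + penta (n + 3) + penta (n + 2) + penta (n + 1) + penta n

set_option maxHeartbeats 2000000 in
lemma penta_key (m : ℕ) :
    penta (m+15) * penta (m+18) - 2 * (penta (m+14) * penta (m+17)) - 4 * (penta (m+13) * penta (m+16)) - 7 * (penta (m+12) * penta (m+15)) - 14 * (penta (m+11) * penta (m+14)) - 28 * (penta (m+10) * penta (m+13)) + 4 * (penta (m+9) * penta (m+12)) + 6 * (penta (m+8) * penta (m+11)) + 4 * (penta (m+6) * penta (m+9)) + 10 * (penta (m+5) * penta (m+8)) - penta (m+3) * penta (m+6) - penta m * penta (m+3) = 0 := by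
  have h5 : penta (m+5) = penta (m+4) + penta (m+3) + penta (m+2) + penta (m+1) + penta m := rfl
  have h6 : penta (m+6) = penta (m+5) + penta (m+4) + penta (m+3) + penta (m+2) + penta (m+1) := rfl
  have h7 : penta (m+7) = penta (m+6) + penta (m+5) + penta (m+4) + penta (m+3) + penta (m+2) := rfl
  have h8 : penta (m+8) = penta (m+7) + penta (m+6) + penta (m+5) + penta (m+4) + penta (m+3) := rfl
  have h9 : penta (m+9) = penta (m+8) + penta (m+7) + penta (m+6) + penta (m+5) + penta (m+4) := rfl
  have h10 : penta (m+10) = penta (m+9) + penta (m+8) + penta (m+7) + penta (m+6) + penta (m+5) := rfl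
  have h11 : penta (m+11) = penta (m+10) + penta (m+9) + penta (m+8) + penta (m+7) + penta (m+6) := rfl
  have h12 : penta (m+12) = penta (m+11) + penta (m+10) + penta (m+9) + penta (m+8) + penta (m+7) := rfl
  have h13 : penta (m+13) = penta (m+12) + penta (m+11) + penta (m+10) + penta (m+9) + penta (m+8) := rfl
  have h14 : penta (m+14) = penta (m+13) + penta (m+12) + penta (m+11) + penta (m+10) + penta (m+9) := rfl
  have h15 : penta (m+15) = penta (m+14) + penta (m+13) + penta (m+12) + penta (m+11) + penta (m+10) := rfl
  have h16 : penta (m+16) = penta (m+15) + penta (m+14) + penta (m+13) + penta (m+12) + penta (m+11) := rfl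
  have h17 : penta (m+17) = penta (m+16) + penta (m+15) + penta (m+14) + penta (m+13) + penta (m+12) := rfl
  have h18 : penta (m+18) = penta (m+17) + penta (m+16) + penta (m+15) + penta (m+14) + penta (m+13) := rfl
  rw [h18, h17, h16, h15, h14, h13, h12, h11, h10, h9, h8, h7, h6, h5]
  ring

open PowerSeries in
theorem penta_shifted_genfun :
    (1 - 2 * X - 4 * X ^ 2 - 7 * X ^ 3 - 14 * X ^ 4 - 28 * X ^ 5 + 4 * X ^ 6
        + 6 * X ^ 7 + 4 * X ^ 9 + 10 * X ^ 10 - X ^ 12 - X ^ 15 : PowerSeries ℤ)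
      * PowerSeries.mk (fun n => penta n * penta (n + 3))
    = 4 * X := by
  rw [show (4 * X : PowerSeries ℤ) = C 4 * X ^ 1 by simp only [map_ofNat]; ring]
  rw [show (1 - 2 * X - 4 * X ^ 2 - 7 * X ^ 3 - 14 * X ^ 4 - 28 * X ^ 5 + 4 * X ^ 6
        + 6 * X ^ 7 + 4 * X ^ 9 + 10 * X ^ 10 - X ^ 12 - X ^ 15 : PowerSeries ℤ)
      * PowerSeries.mk (fun n => penta n * penta (n + 3))
      = PowerSeries.mk (fun n => penta n * penta (n + 3))
        - C 2 * (PowerSeries.mk (fun n => penta n * penta (n + 3)) * X ^ 1)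
        - C 4 * (PowerSeries.mk (fun n => penta n * penta (n + 3)) * X ^ 2)
        - C 7 * (PowerSeries.mk (fun n => penta n * penta (n + 3)) * X ^ 3)
        - C 14 * (PowerSeries.mk (fun n => penta n * penta (n + 3)) * X ^ 4)
        - C 28 * (PowerSeries.mk (fun n => penta n * penta (n + 3)) * X ^ 5)
        + C 4 * (PowerSeries.mk (fun n => penta n * penta (n + 3)) * X ^ 6)
        + C 6 * (PowerSeries.mk (fun n => penta n * penta (n + 3)) * X ^ 7)
        + C 4 * (PowerSeries.mk (fun n => penta n * penta (n + 3)) * X ^ 9)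
        + C 10 * (PowerSeries.mk (fun n => penta n * penta (n + 3)) * X ^ 10)
        - PowerSeries.mk (fun n => penta n * penta (n + 3)) * X ^ 12
        - PowerSeries.mk (fun n => penta n * penta (n + 3)) * X ^ 15
      by simp only [map_ofNat]; ring]
  ext n
  simp only [map_sub, map_add, PowerSeries.coeff_C_mul, PowerSeries.coeff_mul_X_pow',
    PowerSeries.coeff_mk, PowerSeries.coeff_X_pow, PowerSeries.coeff_C]
  rcases lt_or_ge n 15 with hn | hn
  · interval_cases n <;> norm_num [penta]
  · obtain ⟨m, rfl⟩ := Nat.exists_eq_add_of_le' hn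
    simp only [show (1 ≤ m+15) = True from eq_true (by omega), show (2 ≤ m+15) = True from eq_true (by omega), show (3 ≤ m+15) = True from eq_true (by omega), show (4 ≤ m+15) = True from eq_true (by omega), show (5 ≤ m+15) = True from eq_true (by omega), show (6 ≤ m+15) = True from eq_true (by omega), show (7 ≤ m+15) = True from eq_true (by omega), show (9 ≤ m+15) = True from eq_true (by omega), show (10 ≤ m+15) = True from eq_true (by omega), show (12 ≤ m+15) = True from eq_true (by omega), show (15 ≤ m+15) = True from eq_true (by omega), show m+15-1 = m+14 by omega, show m+15-2 = m+13 by omega, show m+15-3 = m+12 by omega, show m+15-4 = m+11 by omega, show m+15-5 = m+10 by omega, show m+15-6 = m+9 by omega, show m+15-7 = m+8 by omega, show m+15-9 = m+6 by omega, show m+15-10 = m+5 by omega, show m+15-12 = m+3 by omega, show m+15-15 = m+0 by omega, show m+15+3 = m+18 from rfl, show m+14+3 = m+17 from rfl, show m+13+3 = m+16 from rfl, show m+12+3 = m+15 from rfl, show m+11+3 = m+14 from rfl, show m+10+3 = m+13 from rfl, show m+9+3 = m+12 from rfl, show m+8+3 = m+11 from rfl, show m+6+3 = m+9 from rfl, show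 m+5+3 = m+8 from rfl, show m+3+3 = m+6 from rfl, show (m+15 = 1) = False from eq_false (by omega), show (m+14 = 0) = False from eq_false (by omega), if_true, if_false, mul_zero, mul_one]
    simp only [show m+0+3 = m+3 from rfl, Nat.add_zero]
    linear_combination penta_key m
end

section
/- For every natural number h ≥ 1, the formal power series C(x) = ∑_{n≥0} (−1/((h+1)n − 1)) · binom(((h+1)n − 1)/h, n) · x^n in ℚ⟦x⟧, where binom(q, n) = q(q−1)⋯(q−n+1)/n! is the generalized binomial coefficient of the rational number q, satisfies C(x)^{h+1} − C(x) + x = 0. (In particular the constant coefficient of C is 1, coming from the n = 0 term.) -/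
/-- The generalized binomial coefficient binom(q, n) = q(q-1)⋯(q-n+1)/n! for a
    rational number `q` and a natural number `n`. -/
def qbinom (q : ℚ) (n : ℕ) : ℚ :=
  (∏ i ∈ Finset.range n, (q - i)) / (Nat.factorial n : ℚ)

lemma qbinom_zero (q : ℚ) : qbinom q 0 = 1 := by simp [qbinom]

lemma qbinom_one (q : ℚ) : qbinom q 1 = q := by simp [qbinom]

-- absorption (peel top factor)
lemma qbinom_succ_top (q : ℚ) (k : ℕ) :
    qbinom q (k+1) = q / (k+1) * qbinom (q-1) k := by
  unfold qbinom
  rw [Finset.prod_range_succ']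
  have h1 : ∀ i ∈ Finset.range k, (q - ((i:ℕ)+1 : ℕ)) = (q - 1) - (i : ℚ) := by
    intro i _; push_cast; ring
  rw [Finset.prod_congr rfl h1]
  have hk : ((k:ℚ)+1) ≠ 0 := by positivity
  have hf : ((Nat.factorial k : ℚ)) ≠ 0 := by
    exact_mod_cast Nat.factorial_ne_zero k
  rw [Nat.factorial_succ]
  push_cast
  field_simp
  ring

-- peel bottom factor
lemma qbinom_succ_bot (q : ℚ) (k : ℕ) :
    qbinom q (k+1) = qbinom q k * (q - k) / (k+1) := by
  unfold qbinom
  rw [Finset.prod_range_succ, Nat.factorial_succ]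
  have hk : ((k:ℚ)+1) ≠ 0 := by positivity
  have hf : ((Nat.factorial k : ℚ)) ≠ 0 := by
    exact_mod_cast Nat.factorial_ne_zero k
  push_cast
  field_simp

lemma qbinom_pascal (q : ℚ) (k : ℕ) :
    qbinom q (k+1) = qbinom (q-1) (k+1) + qbinom (q-1) k := by
  rw [qbinom_succ_top q k, qbinom_succ_bot (q-1) k]
  have hk : ((k:ℚ)+1) ≠ 0 := by positivity
  field_simp
  ring

def aseq (t r : ℚ) : ℕ → ℚ
  | 0 => 1
  | (k+1) => qbinom (r + t*(k+1)) (k+1) - t * qbinom (r + t*(k+1) - 1) k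

lemma aseq_succ (t r : ℚ) (k : ℕ) :
    aseq t r (k+1) = qbinom (r + t*(k+1)) (k+1) - t * qbinom (r + t*(k+1) - 1) k := rfl

lemma aseq_zero_left (t : ℚ) (k : ℕ) : aseq t 0 (k+1) = 0 := by
  rw [aseq_succ, qbinom_succ_top]
  have hk : ((k:ℚ)+1) ≠ 0 := by positivity
  have e : (0 + t*((k:ℚ)+1)) / ((k:ℚ)+1) = t := by field_simp; ring
  rw [e]
  ring

lemma aseq_rec (t r : ℚ) (k : ℕ) :
    aseq t r (k+1) - aseq t (r-1) (k+1) = aseq t (r+t-1) k := by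
  cases k with
  | zero =>
    rw [aseq_succ, aseq_succ]
    show _ = (1:ℚ)
    rw [qbinom_one, qbinom_one, qbinom_zero, qbinom_zero]
    push_cast
    ring
  | succ k =>
    rw [aseq_succ, aseq_succ, aseq_succ]
    push_cast
    have e2 : r - 1 + t*((k:ℚ)+1+1) - 1 = (r + t*((k:ℚ)+1+1) - 1) - 1 := by ring
    have e1 : r - 1 + t*((k:ℚ)+1+1) = (r + t*((k:ℚ)+1+1)) - 1 := by ring
    have e4 : r + t - 1 + t*((k:ℚ)+1) - 1 = (r + t*((k:ℚ)+1+1) - 1) - 1 := by ring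
    have e3 : r + t - 1 + t*((k:ℚ)+1) = (r + t*((k:ℚ)+1+1)) - 1 := by ring
    rw [e2, e1, e4, e3]
    have p1 := qbinom_pascal (r + t*((k:ℚ)+1+1)) (k+1)
    have p2 := qbinom_pascal (r + t*((k:ℚ)+1+1) - 1) k
    linear_combination p1 - t * p2

open Polynomial in
noncomputable def qbPoly (c : ℚ) (k : ℕ) : Polynomial ℚ :=
  Polynomial.C (1 / (Nat.factorial k : ℚ)) * ∏ i ∈ Finset.range k, (X + Polynomial.C (c - i))

lemma qbPoly_eval (c r : ℚ) (k : ℕ) : (qbPoly c k).eval r = qbinom (r + c) k := by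
  simp only [qbPoly, Polynomial.eval_mul, Polynomial.eval_C, Polynomial.eval_prod,
    Polynomial.eval_add, Polynomial.eval_X, qbinom]
  rw [Finset.prod_congr rfl (fun i _ => by ring : ∀ i ∈ Finset.range k, r + (c - (i:ℚ)) = r + c - i)]
  ring

noncomputable def aPoly (t : ℚ) : ℕ → Polynomial ℚ
  | 0 => 1
  | (k+1) => qbPoly (t*(k+1)) (k+1) - Polynomial.C t * qbPoly (t*(k+1) - 1) k

lemma aPoly_eval (t r : ℚ) (k : ℕ) : (aPoly t k).eval r = aseq t r k := by
  cases k with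
  | zero => simp [aPoly, aseq]
  | succ k =>
    show (qbPoly (t*(k+1)) (k+1) - Polynomial.C t * qbPoly (t*(k+1) - 1) k).eval r
      = qbinom (r + t*(k+1)) (k+1) - t * qbinom (r + t*(k+1) - 1) k
    rw [Polynomial.eval_sub, Polynomial.eval_mul, Polynomial.eval_C, qbPoly_eval, qbPoly_eval]
    rw [show r + (t*((k:ℚ)+1) - 1) = r + t*((k:ℚ)+1) - 1 by ring]

lemma eval_const_of_periodic (p : Polynomial ℚ)
    (hp : ∀ x : ℚ, p.eval x = p.eval (x - 1)) (x : ℚ) : p.eval x = p.eval 0 := by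
  have hnat : ∀ m : ℕ, p.eval (m : ℚ) = p.eval 0 := by
    intro m
    induction m with
    | zero => norm_num
    | succ k ih =>
      have h1 := hp ((k:ℚ)+1)
      rw [show ((k:ℚ)+1) - 1 = (k:ℚ) by ring] at h1
      push_cast
      rw [h1, ih]
  have hpoly : p = Polynomial.C (p.eval 0) := by
    apply Polynomial.eq_of_infinite_eval_eq
    apply Set.Infinite.mono (s := Set.range (fun m : ℕ => (m:ℚ)))
    · rintro y ⟨m, rfl⟩
      simp [hnat m]
    · exact Set.infinite_range_of_injective Nat.cast_injective
  conv_lhs => rw [hpoly]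
  simp

theorem aseq_conv (t : ℚ) (n : ℕ) : ∀ (r s : ℚ),
    ∑ k ∈ Finset.range (n+1), aseq t r k * aseq t s (n-k) = aseq t (r+s) n := by
  induction n with
  | zero => intro r s; simp [aseq]
  | succ n ih =>
    intro r s
    set D : Polynomial ℚ :=
      (∑ k ∈ Finset.range (n+2), aPoly t k * Polynomial.C (aseq t s (n+1-k)))
        - (aPoly t (n+1)).comp (Polynomial.X + Polynomial.C s) with hD
    have hDeval : ∀ x : ℚ, D.eval x =
        (∑ k ∈ Finset.range (n+2), aseq t x k * aseq t s (n+1-k)) - aseq t (x + s) (n+1) := by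
      intro x
      simp only [hD, Polynomial.eval_sub, Polynomial.eval_finset_sum, Polynomial.eval_mul,
        Polynomial.eval_C, Polynomial.eval_comp, Polynomial.eval_add, Polynomial.eval_X,
        aPoly_eval]
    have hper : ∀ x : ℚ, D.eval x = D.eval (x - 1) := by
      intro x
      rw [hDeval, hDeval]
      have key : (∑ k ∈ Finset.range (n+2), aseq t x k * aseq t s (n+1-k))
          - (∑ k ∈ Finset.range (n+2), aseq t (x-1) k * aseq t s (n+1-k))
          = ∑ k ∈ Finset.range (n+1), aseq t (x+t-1) k * aseq t s (n-k) := by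
        rw [← Finset.sum_sub_distrib]
        rw [Finset.sum_range_succ']
        have h0 : (aseq t x 0 * aseq t s (n+1-0) - aseq t (x-1) 0 * aseq t s (n+1-0)) = 0 := by
          simp [aseq]
        rw [h0, add_zero]
        apply Finset.sum_congr rfl
        intro k hk
        rw [show n+1-(k+1) = n-k from by omega, ← sub_mul, aseq_rec]
      have step : aseq t (x+s) (n+1) - aseq t (x-1+s) (n+1) = aseq t (x+s+t-1) n := by
        have h1 := aseq_rec t (x+s) n
        rw [show x+s-1 = x-1+s by ring] at h1
        exact h1
      have ihx := ih (x+t-1) s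
      rw [show x+t-1+s = x+s+t-1 by ring] at ihx
      linarith [key, step, ihx]
    have h0 : D.eval 0 = 0 := by
      rw [hDeval]
      rw [Finset.sum_range_succ']
      have hz : ∀ k ∈ Finset.range (n+1), aseq t 0 (k+1) * aseq t s (n+1-(k+1)) = 0 := by
        intro k _; rw [aseq_zero_left]; ring
      rw [Finset.sum_congr rfl hz]
      simp [aseq]
    have := eval_const_of_periodic D hper r
    rw [hDeval r, h0] at this
    linarith [this]

open PowerSeries

lemma mk_aseq_mul (t r s : ℚ) :
    (PowerSeries.mk (aseq t r) : PowerSeries ℚ) * PowerSeries.mk (aseq t s)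
      = PowerSeries.mk (aseq t (r+s)) := by
  ext n
  rw [coeff_mk, coeff_mul, Finset.Nat.sum_antidiagonal_eq_sum_range_succ_mk]
  simp only [coeff_mk]
  exact aseq_conv t n r s

lemma mk_aseq_one (t : ℚ) : (PowerSeries.mk (aseq t 0) : PowerSeries ℚ) = 1 := by
  ext n
  cases n with
  | zero => simp [aseq]
  | succ n => simp [aseq_zero_left, coeff_one]

lemma mk_aseq_pow (t r : ℚ) (m : ℕ) :
    (PowerSeries.mk (aseq t r) : PowerSeries ℚ) ^ m = PowerSeries.mk (aseq t (m * r)) := by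
  induction m with
  | zero => simpa using (mk_aseq_one t).symm
  | succ m ih =>
    rw [pow_succ, ih, mk_aseq_mul]
    push_cast
    ring_nf

open PowerSeries in
theorem generalized_binomial_series_neg_root (h : ℕ) (hh : 1 ≤ h)
    (C : PowerSeries ℚ)
    (hC : C = PowerSeries.mk fun n =>
      (-1 / (((h + 1 : ℕ) : ℚ) * n - 1))
        * qbinom ((((h + 1 : ℕ) : ℚ) * n - 1) / (h : ℚ)) n) :
    C ^ (h + 1) - C + X = 0 := by
  have hh0 : (h:ℚ) ≠ 0 := by
    have : (1:ℚ) ≤ (h:ℚ) := by exact_mod_cast hh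
    linarith
  have h1 : (1:ℚ) ≤ (h:ℚ) := by exact_mod_cast hh
  set t : ℚ := ((h:ℚ)+1)/(h:ℚ) with ht
  -- C = mk (aseq t (1-t))
  have hCa : C = PowerSeries.mk (aseq t (1-t)) := by
    rw [hC]
    apply PowerSeries.ext
    intro n
    rw [coeff_mk, coeff_mk]
    cases n with
    | zero =>
      show (-1 / (((h + 1 : ℕ) : ℚ) * ((0:ℕ):ℚ) - 1)) * qbinom _ 0 = (1:ℚ)
      rw [qbinom_zero]
      norm_num
    | succ k =>
      rw [aseq_succ]
      have harg : 1 - t + t*((k:ℚ)+1) = (((h+1:ℕ):ℚ) * ((k:ℕ)+1:ℕ) - 1) / (h:ℚ) := by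
        rw [ht]
        push_cast
        field_simp
        ring
      have hq0 : ((h:ℚ)+1) * ((k:ℚ)+1) - 1 ≠ 0 := by
        have hk0 : (0:ℚ) ≤ (k:ℚ) := by positivity
        nlinarith
      push_cast at harg ⊢
      rw [harg, qbinom_succ_top]
      have hk1 : ((k:ℚ)+1) ≠ 0 := by positivity
      set q : ℚ := (((h:ℚ)+1) * ((k:ℚ)+1) - 1) / (h:ℚ) with hq
      have : -1 / (((h:ℚ)+1) * ((k:ℚ)+1) - 1) * (q / ((k:ℚ)+1) * qbinom (q-1) k)
          = q / ((k:ℚ)+1) * qbinom (q-1) k - t * qbinom (q - 1) k := by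
        rw [hq, ht]
        field_simp
        ring
      rw [this]
  -- C^(h+1) = mk (aseq t (-t))
  have hpow : C ^ (h+1) = PowerSeries.mk (aseq t (-t)) := by
    rw [hCa, mk_aseq_pow]
    rw [show ((h+1:ℕ):ℚ) * (1 - t) = -t by rw [ht]; push_cast; field_simp; ring]
  -- finish
  rw [hpow, hCa]
  apply PowerSeries.ext
  intro n
  rw [map_add, map_sub, coeff_mk, coeff_mk, coeff_X, map_zero]
  cases n with
  | zero => simp [aseq]
  | succ k =>
    have hrec := aseq_rec t (1-t) k
    rw [show (1-t)-1 = -t by ring, show 1-t+t-1 = (0:ℚ) by ring] at hrec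
    cases k with
    | zero =>
      have h00 : aseq t 0 0 = 1 := rfl
      rw [h00] at hrec
      norm_num
      linarith
    | succ k =>
      rw [aseq_zero_left] at hrec
      have : (k+1+1 : ℕ) ≠ 1 := by omega
      rw [if_neg this]
      linarith
end

section
/- For all natural numbers h ≥ 1 and n ≥ 2, the identity (1/((h+1)n − 1)) · binom(((h+1)n − 1)/h, n) = (1/(n − 1)) · binom((h+1)(n − 1)/h, n) holds in ℚ, where binom(q, n) = q(q−1)⋯(q−n+1)/n! is the generalized binomial coefficient of the rational number q. -/
theorem qbinom_identity (h n : ℕ) (hh : 1 ≤ h) (hn : 2 ≤ n) :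
    (1 / (((h : ℚ) + 1) * n - 1)) * qbinom ((((h : ℚ) + 1) * n - 1) / h) n
      = (1 / ((n : ℚ) - 1)) * qbinom (((h : ℚ) + 1) * ((n : ℚ) - 1) / h) n := by
  obtain ⟨m, rfl⟩ : ∃ m, n = m + 1 := ⟨n - 1, by omega⟩
  have hh1 : (1 : ℚ) ≤ (h : ℚ) := by exact_mod_cast hh
  have hm1 : (1 : ℚ) ≤ (m : ℚ) := by
    have : 1 ≤ m := by omega
    exact_mod_cast this
  have hh0 : (h : ℚ) ≠ 0 := by linarith
  have hm0 : (m : ℚ) ≠ 0 := by linarith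
  have ha : ((h : ℚ) + 1) * ((m : ℚ) + 1) - 1 ≠ 0 := by nlinarith
  set q : ℚ := (((h : ℚ) + 1) * ((m + 1 : ℕ) : ℚ) - 1) / h with hq
  have hq2 : ((h : ℚ) + 1) * (((m + 1 : ℕ) : ℚ) - 1) / h = q - 1 := by
    rw [hq]; push_cast; field_simp; ring
  rw [hq2]
  unfold qbinom
  rw [Finset.prod_range_succ', Finset.prod_range_succ]
  have hcongr : ∀ i ∈ Finset.range m, (q - ((i : ℚ) + 1)) = (q - 1 - (i : ℚ)) := by
    intro i _; ring
  have hprod : (∏ i ∈ Finset.range m, (q - ((i + 1 : ℕ) : ℚ)))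
      = ∏ i ∈ Finset.range m, (q - 1 - (i : ℚ)) := by
    apply Finset.prod_congr rfl
    intro i _; push_cast; ring
  rw [hprod]
  have hfac : ((m + 1 : ℕ).factorial : ℚ) ≠ 0 := by
    exact_mod_cast (m + 1).factorial_ne_zero
  rw [hq]
  push_cast
  generalize (∏ x ∈ Finset.range m, ((((h : ℚ) + 1) * ((m : ℚ) + 1) - 1) / (h : ℚ) - 1 - (x : ℚ))) = P
  simp only [add_sub_cancel_right]
  field_simp
  ring
end

section
/- Let h ≥ 1 be a natural number and let r_0, r_1, …, r_h be pairwise distinct nonzero complex numbers such that the polynomial factorization z^{h+1} − 2z + 1 = ∏_{i=0}^{h} (z − r_i) holds in ℂ[z]. Let (c_n)_{n≥0} be the sequence of coefficients of the formal power series (1 − 2z + z^{h+1})⁻¹ in ℂ⟦z⟧ (equivalently, c_0 = 1, c_n = 2c_{n−1} for 1 ≤ n ≤ h, and c_n = 2c_{n−1} − c_{n−h−1} for n ≥ h+1). Then for every n ≥ 0, c_n = −∑_{i=0}^{h} r_i^{−(n+1)} · ∏_{j≠i} (r_i − r_j)^{−1}. -/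
open PowerSeries in
theorem binet_type_formula (h : ℕ) (hh : 1 ≤ h)
    (r : Fin (h + 1) → ℂ)
    (hr0 : ∀ i, r i ≠ 0)
    (hrinj : Function.Injective r)
    (hfac : (Polynomial.X ^ (h + 1) - 2 * Polynomial.X + 1 : Polynomial ℂ)
      = ∏ i, (Polynomial.X - Polynomial.C (r i)))
    (c : ℕ → ℂ)
    (hc : ∀ n, c n = PowerSeries.coeff n
      ((1 - 2 * X + X ^ (h + 1) : PowerSeries ℂ)⁻¹))
    (n : ℕ) :
    c n = -∑ i, (r i ^ (n + 1))⁻¹ * ∏ j ∈ Finset.univ.erase i, (r i - r j)⁻¹ := by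
  classical
  set w : Fin (h + 1) → ℂ := fun i => (∏ j ∈ Finset.univ.erase i, (r i - r j))⁻¹ with hw
  set G : Fin (h + 1) → PowerSeries ℂ :=
    fun i => PowerSeries.mk (fun m => (r i ^ (m + 1))⁻¹) with hG
  have key : ∀ i, ((X : PowerSeries ℂ) - PowerSeries.C (r i)) * G i = -1 := by
    intro i
    ext m
    rw [sub_mul]
    cases m with
    | zero =>
      simp [hG, inv_pow, mul_inv_cancel₀ (hr0 i)]
    | succ k =>
      simp only [map_sub, coeff_succ_X_mul, hG, coeff_mk, PowerSeries.coeff_C_mul,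
        map_neg, PowerSeries.coeff_one, Nat.succ_ne_zero, if_false, neg_zero]
      field_simp
      rw [pow_succ (r i) (k+1), mul_comm (r i ^ (k+1)) (r i), ← div_div, div_self (hr0 i), sub_self]
  set T : PowerSeries ℂ := -∑ i, PowerSeries.C (w i) * G i with hT
  set P : PowerSeries ℂ := ∏ i, ((X : PowerSeries ℂ) - PowerSeries.C (r i)) with hP
  have hPT : P * T = 1 := by
    have step : P * T = ∑ i, PowerSeries.C (w i) *
        ∏ j ∈ Finset.univ.erase i, ((X : PowerSeries ℂ) - PowerSeries.C (r j)) := by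
      rw [hT, mul_neg, Finset.mul_sum, ← Finset.sum_neg_distrib]
      refine Finset.sum_congr rfl fun i _ => ?_
      have hPi : P = ((X : PowerSeries ℂ) - PowerSeries.C (r i)) *
          ∏ j ∈ Finset.univ.erase i, ((X : PowerSeries ℂ) - PowerSeries.C (r j)) :=
        (Finset.mul_prod_erase _ _ (Finset.mem_univ i)).symm
      rw [hPi]
      rw [show ((X : PowerSeries ℂ) - PowerSeries.C (r i)) *
            (∏ j ∈ Finset.univ.erase i, ((X : PowerSeries ℂ) - PowerSeries.C (r j))) *
            (PowerSeries.C (w i) * G i)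
          = (((X : PowerSeries ℂ) - PowerSeries.C (r i)) * G i) *
            (PowerSeries.C (w i) *
              ∏ j ∈ Finset.univ.erase i, ((X : PowerSeries ℂ) - PowerSeries.C (r j)))
          by ring, key i]
      ring
    rw [step]
    -- use Lagrange interpolation identity
    have hlag : (∑ i, Lagrange.basis Finset.univ r i : Polynomial ℂ) = 1 :=
      Lagrange.sum_basis (hrinj.injOn) ⟨0, Finset.mem_univ 0⟩
    have hbasis : ∀ i, (Lagrange.basis Finset.univ r i : Polynomial ℂ)
        = Polynomial.C (w i) * ∏ j ∈ Finset.univ.erase i,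
            (Polynomial.X - Polynomial.C (r j)) := by
      intro i
      rw [Lagrange.basis, hw]
      simp only [Lagrange.basisDivisor]
      rw [Finset.prod_mul_distrib, ← map_prod, Finset.prod_inv_distrib]
    have := congrArg (Polynomial.coeToPowerSeries.ringHom (R := ℂ)) hlag
    simp only [map_sum, map_one, hbasis, map_mul, map_prod, map_sub,
      Polynomial.coeToPowerSeries.ringHom_apply, Polynomial.coe_C, Polynomial.coe_X] at this
    convert this using 1
  have hPeq : (1 - 2 * X + X ^ (h + 1) : PowerSeries ℂ) = P := by
    have := congrArg (Polynomial.coeToPowerSeries.ringHom (R := ℂ)) hfac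
    simp only [map_add, map_sub, map_mul, map_pow, map_one, map_prod, map_ofNat,
      Polynomial.coeToPowerSeries.ringHom_apply, Polynomial.coe_C, Polynomial.coe_X] at this
    rw [hP, ← this]
    ring
  have hconst : PowerSeries.constantCoeff (1 - 2 * X + X ^ (h + 1) : PowerSeries ℂ) ≠ 0 := by
    simp [pow_succ, mul_comm]
  have hTinv : T = (1 - 2 * X + X ^ (h + 1) : PowerSeries ℂ)⁻¹ := by
    rw [PowerSeries.eq_inv_iff_mul_eq_one hconst, hPeq, mul_comm, hPT]
  rw [hc n, ← hTinv, hT]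
  simp only [map_neg, map_sum, PowerSeries.coeff_C_mul, hG, coeff_mk]
  rw [neg_inj]
  refine Finset.sum_congr rfl fun i _ => ?_
  rw [hw, Finset.prod_inv_distrib, mul_comm]
end
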